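/- Let Γ be an almost semisimple directed graph of growth λ > 1 and let v be a vertex of small growth. Then there exist c > 0 and λ₁ < λ such that for all n ≥ 0, the number of directed paths of length n starting at v is at most c·λ₁ⁿ. -/

import Mathlib

open Filter Polynomial

namespace SmallGrowthAux

variable {V : Type*} [Fintype V] [DecidableEq V]

/-- product of linear factors -/
noncomputable def Pl (l : Multiset ℂ) : ℂ[X] := (l.map (fun μ => X - C μ)).prod

lemma Pl_cons (μ : ℂ) (s : Multiset ℂ) : Pl (μ ::ₘ s) = (X - C μ) * Pl s := by
  simp [Pl]

lemma Pl_add (s t : Multiset ℂ) : Pl (s + t) = Pl s * Pl t := by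
  simp [Pl, Multiset.prod_add]

lemma aeval_mul_mulVec (A : Matrix V V ℂ) (f g : ℂ[X]) (x : V → ℂ) :
    (aeval A (f * g)).mulVec x = (aeval A f).mulVec ((aeval A g).mulVec x) := by
  rw [map_mul, Matrix.mulVec_mulVec]

lemma aeval_X_sub_C_eq (A : Matrix V V ℂ) (μ : ℂ) :
    aeval A (X - C μ) = A - μ • 1 := by
  rw [map_sub, aeval_X, aeval_C, Algebra.algebraMap_eq_smul_one]

lemma dedup_kill (A : Matrix V V ℂ) (l : Multiset ℂ)
    (hss : ∀ μ ∈ l, ∀ x : V → ℂ,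
      (A - μ • 1).mulVec ((A - μ • 1).mulVec x) = 0 → (A - μ • 1).mulVec x = 0)
    (x : V → ℂ) (hx : (aeval A (Pl l)).mulVec x = 0) :
    (aeval A (Pl l.dedup)).mulVec x = 0 := by
  induction l using Multiset.induction generalizing x with
  | empty => simpa using hx
  | cons μ s ih =>
    by_cases hm : μ ∈ s
    · rw [Multiset.dedup_cons_of_mem hm]
      obtain ⟨s', rfl⟩ : ∃ s', s = μ ::ₘ s' := ⟨s.erase μ, (Multiset.cons_erase hm).symm⟩
      refine ih (fun ν hν => hss ν (Multiset.mem_cons_of_mem hν)) x ?_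
      rw [Pl_cons, aeval_mul_mulVec, aeval_X_sub_C_eq]
      apply hss μ (Multiset.mem_cons_self μ _)
      rw [Pl_cons, Pl_cons, aeval_mul_mulVec, aeval_mul_mulVec, aeval_X_sub_C_eq] at hx
      exact hx
    · rw [Multiset.dedup_cons_of_notMem hm, Pl_cons, mul_comm, aeval_mul_mulVec,
        aeval_X_sub_C_eq]
      refine ih (fun ν hν => hss ν (Multiset.mem_cons_of_mem hν)) _ ?_
      rw [Pl_cons, mul_comm, aeval_mul_mulVec, aeval_X_sub_C_eq] at hx
      exact hx

lemma coprime_Pl_right (f : ℂ[X]) (t : Multiset ℂ)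
    (h : ∀ ν ∈ t, IsCoprime f (X - C ν)) : IsCoprime f (Pl t) := by
  induction t using Multiset.induction with
  | empty => simpa [Pl] using isCoprime_one_right
  | cons ν s ih =>
    rw [Pl_cons]
    exact (h ν (Multiset.mem_cons_self _ _)).mul_right
      (ih fun ν' hν' => h ν' (Multiset.mem_cons_of_mem hν'))

lemma coprime_Pl (s t : Multiset ℂ) (h : ∀ μ ∈ s, ∀ ν ∈ t, μ ≠ ν) :
    IsCoprime (Pl s) (Pl t) := by
  induction s using Multiset.induction with
  | empty => simpa [Pl] using isCoprime_one_left
  | cons μ s' ih =>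
    rw [Pl_cons]
    refine IsCoprime.mul_left ?_ (ih fun μ' hμ' => h μ' (Multiset.mem_cons_of_mem hμ'))
    refine coprime_Pl_right _ _ fun ν hν => ?_
    exact isCoprime_X_sub_C_of_isUnit_sub
      (isUnit_iff_ne_zero.2 (sub_ne_zero.2 (h μ (Multiset.mem_cons_self _ _) ν hν)))

lemma coprime_split (A : Matrix V V ℂ) {f g : ℂ[X]} (h : IsCoprime f g) (x : V → ℂ)
    (hx : (aeval A (f * g)).mulVec x = 0) :
    ∃ y z : V → ℂ, x = y + z ∧ (aeval A f).mulVec y = 0 ∧ (aeval A g).mulVec z = 0 := by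
  obtain ⟨u, w, huw⟩ := h
  refine ⟨(aeval A (w * g)).mulVec x, (aeval A (u * f)).mulVec x, ?_, ?_, ?_⟩
  · have h1 : (aeval A (u * f + w * g)).mulVec x = x := by rw [huw]; simp
    calc x = (aeval A (u * f + w * g)).mulVec x := h1.symm
      _ = _ := by rw [map_add, Matrix.add_mulVec, add_comm]
  · rw [← aeval_mul_mulVec, show f * (w * g) = w * (f * g) by ring, aeval_mul_mulVec,
      hx, Matrix.mulVec_zero]
  · rw [← aeval_mul_mulVec, show g * (u * f) = u * (f * g) by ring, aeval_mul_mulVec,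
      hx, Matrix.mulVec_zero]

lemma eigen_decomp (A : Matrix V V ℂ) (l : Multiset ℂ) (hl : l.Nodup) (x : V → ℂ)
    (hx : (aeval A (Pl l)).mulVec x = 0) :
    ∃ g : ℂ → (V → ℂ), x = ∑ μ ∈ l.toFinset, g μ ∧
      ∀ μ ∈ l.toFinset, (A - μ • 1).mulVec (g μ) = 0 := by
  induction l using Multiset.induction generalizing x with
  | empty =>
    refine ⟨0, ?_, by simp⟩
    simpa [Pl] using hx
  | cons μ s ih =>
    obtain ⟨hμs, hs⟩ := Multiset.nodup_cons.1 hl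
    rw [Pl_cons] at hx
    obtain ⟨y, z, rfl, hy, hz⟩ := coprime_split A
      (coprime_Pl_right (X - C μ) s fun ν hν =>
        isCoprime_X_sub_C_of_isUnit_sub (isUnit_iff_ne_zero.2 (sub_ne_zero.2
          fun h' => hμs (by rw [h']; exact hν)))) _ hx
    obtain ⟨g, hzsum, hg⟩ := ih hs z hz
    refine ⟨Function.update g μ y, ?_, ?_⟩
    · rw [Multiset.toFinset_cons, Finset.sum_insert (by simpa using hμs),
        Function.update_self, hzsum]
      congr 1
      refine Finset.sum_congr rfl fun ν hν => ?_
      rw [Function.update_of_ne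
        (fun h' => hμs (by rw [← h']; exact Multiset.mem_toFinset.1 hν))]
    · intro ν hν
      rw [Multiset.toFinset_cons] at hν
      rcases Finset.mem_insert.1 hν with rfl | hν'
      · rw [Function.update_self, ← aeval_X_sub_C_eq]; exact hy
      · rw [Function.update_of_ne
          (fun h' => hμs (by rw [← h']; exact Multiset.mem_toFinset.1 hν'))]
        exact hg ν hν'

lemma eigen_pow (A : Matrix V V ℂ) (μ : ℂ) (y : V → ℂ)
    (hy : (A - μ • 1).mulVec y = 0) (n : ℕ) : (A ^ n).mulVec y = μ ^ n • y := by
  have hy' : A.mulVec y = μ • y := by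
    have := hy
    rw [Matrix.sub_mulVec, sub_eq_zero, Matrix.smul_mulVec, Matrix.one_mulVec] at this
    exact this
  induction n with
  | zero => simp
  | succ n ih =>
    rw [pow_succ, ← Matrix.mulVec_mulVec, hy', Matrix.mulVec_smul, ih, pow_succ,
      smul_smul, mul_comm]

lemma growth (A : Matrix V V ℂ) (lam1 : ℝ) (l : Multiset ℂ)
    (h : ∀ μ ∈ l, ‖μ‖ < lam1) (x : V → ℂ)
    (hx : (aeval A (Pl l)).mulVec x = 0) :
    ∃ C : ℝ, ∀ n : ℕ, ‖(A ^ n).mulVec x‖ ≤ C * lam1 ^ n := by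
  induction l using Multiset.induction generalizing x with
  | empty =>
    refine ⟨0, fun n => ?_⟩
    have : x = 0 := by simpa [Pl] using hx
    simp [this]
  | cons μ s ih =>
    have hμ : ‖μ‖ < lam1 := h μ (Multiset.mem_cons_self _ _)
    set x' := (A - μ • 1).mulVec x with hx'def
    have hx's : (aeval A (Pl s)).mulVec x' = 0 := by
      rw [hx'def, ← aeval_X_sub_C_eq, ← aeval_mul_mulVec, mul_comm, ← Pl_cons]
      exact hx
    obtain ⟨C', hC'⟩ := ih (fun ν hν => h ν (Multiset.mem_cons_of_mem hν)) x' hx's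
    have hC'0 : 0 ≤ C' := by
      have := hC' 0
      simp only [pow_zero, mul_one] at this
      exact le_trans (norm_nonneg _) this
    have hpos : 0 < lam1 - ‖μ‖ := sub_pos.2 hμ
    refine ⟨max ‖x‖ (C' / (lam1 - ‖μ‖)), fun n => ?_⟩
    induction n with
    | zero => simpa using le_max_left _ _
    | succ n ihn =>
      have hAx : A.mulVec x = x' + μ • x := by
        rw [hx'def, Matrix.sub_mulVec, Matrix.smul_mulVec, Matrix.one_mulVec]
        abel
      have step : (A ^ (n + 1)).mulVec x
          = (A ^ n).mulVec x' + μ • (A ^ n).mulVec x := by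
        rw [pow_succ, ← Matrix.mulVec_mulVec, hAx, Matrix.mulVec_add, Matrix.mulVec_smul]
      have hnorm : ‖(A ^ (n + 1)).mulVec x‖
          ≤ C' * lam1 ^ n + ‖μ‖ * ‖(A ^ n).mulVec x‖ := by
        rw [step]
        refine le_trans (norm_add_le _ _) (add_le_add (hC' n) ?_)
        rw [norm_smul]
      have hl1 : (0:ℝ) < lam1 := lt_of_le_of_lt (norm_nonneg μ) hμ
      set K := max ‖x‖ (C' / (lam1 - ‖μ‖)) with hK
      have hK2 : C' ≤ K * (lam1 - ‖μ‖) :=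
        (div_le_iff₀ hpos).1 (le_max_right _ _)
      calc ‖(A ^ (n + 1)).mulVec x‖
          ≤ C' * lam1 ^ n + ‖μ‖ * ‖(A ^ n).mulVec x‖ := hnorm
        _ ≤ C' * lam1 ^ n + ‖μ‖ * (K * lam1 ^ n) := by
            refine add_le_add (le_refl _) (mul_le_mul_of_nonneg_left ihn (norm_nonneg μ))
        _ = (C' + ‖μ‖ * K) * lam1 ^ n := by ring
        _ ≤ (K * lam1) * lam1 ^ n := by
            refine mul_le_mul_of_nonneg_right ?_ (pow_nonneg hl1.le n)
            nlinarith [hK2]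
        _ = K * lam1 ^ (n + 1) := by ring

lemma cesaro_of_bounded {a : ℕ → ℂ} {B : ℝ}
    (h : ∀ N, ‖∑ n ∈ Finset.range N, a n‖ ≤ B) :
    Tendsto (fun N : ℕ => (N : ℂ)⁻¹ * ∑ n ∈ Finset.range N, a n) atTop (nhds 0) := by
  have hB : 0 ≤ B := le_trans (norm_nonneg _) (h 0)
  have hg : Tendsto (fun N : ℕ => B * (1 / (N : ℝ))) atTop (nhds 0) := by
    simpa using tendsto_one_div_atTop_nhds_zero_nat.const_mul B
  refine squeeze_zero_norm (fun N => ?_) hg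
  rw [norm_mul, norm_inv, Complex.norm_natCast, mul_comm, one_div]
  exact mul_le_mul_of_nonneg_right (h N) (inv_nonneg.2 (Nat.cast_nonneg N))

lemma cesaro_geom {z : ℂ} (hz : ‖z‖ = 1) (hz1 : z ≠ 1) :
    Tendsto (fun N : ℕ => (N : ℂ)⁻¹ * ∑ n ∈ Finset.range N, z ^ n) atTop (nhds 0) := by
  have hden : 0 < ‖z - 1‖ := norm_pos_iff.2 (sub_ne_zero.2 hz1)
  refine cesaro_of_bounded (B := 2 / ‖z - 1‖) fun N => ?_
  rw [geom_sum_eq hz1, norm_div]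
  have h2 : ‖z ^ N - 1‖ ≤ 2 :=
    calc ‖z ^ N - 1‖ ≤ ‖z ^ N‖ + ‖(1 : ℂ)‖ := norm_sub_le _ _
      _ = 2 := by rw [norm_pow, hz]; norm_num
  gcongr

lemma cesaro_decay {a : ℕ → ℂ} {C r : ℝ} (hr0 : 0 ≤ r) (hr : r < 1)
    (h : ∀ n, ‖a n‖ ≤ C * r ^ n) :
    Tendsto (fun N : ℕ => (N : ℂ)⁻¹ * ∑ n ∈ Finset.range N, a n) atTop (nhds 0) := by
  have hC : 0 ≤ C := by
    have := h 0; simp only [pow_zero, mul_one] at this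
    exact le_trans (norm_nonneg _) this
  refine cesaro_of_bounded (B := C * (1 - r)⁻¹) fun N => ?_
  calc ‖∑ n ∈ Finset.range N, a n‖ ≤ ∑ n ∈ Finset.range N, C * r ^ n :=
        norm_sum_le_of_le _ fun n _ => h n
    _ = C * ∑ n ∈ Finset.range N, r ^ n := by rw [Finset.mul_sum]
    _ ≤ C * (1 - r)⁻¹ := by
        refine mul_le_mul_of_nonneg_left ?_ hC
        rw [geom_sum_eq hr.ne]
        have h1 : (0:ℝ) < 1 - r := by linarith
        have h2 : (0:ℝ) ≤ r ^ N := pow_nonneg hr0 N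
        rw [div_le_iff_of_neg (by linarith : r - 1 < 0)]
        have h3 : (1 - r)⁻¹ * (1 - r) = 1 := inv_mul_cancel₀ h1.ne'
        nlinarith

lemma cesaro_one :
    Tendsto (fun N : ℕ => (N : ℂ)⁻¹ * ∑ n ∈ Finset.range N, (1 : ℂ) ^ n) atTop
      (nhds 1) := by
  have : ∀ᶠ N : ℕ in atTop, (N : ℂ)⁻¹ * ∑ n ∈ Finset.range N, (1 : ℂ) ^ n = 1 := by
    filter_upwards [eventually_ge_atTop 1] with N hN
    have hN0 : (N : ℂ) ≠ 0 := Nat.cast_ne_zero.2 (by omega)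
    simp [Finset.sum_const, inv_mul_cancel₀ hN0, mul_comm]
  exact tendsto_const_nhds.congr' (this.mono fun N h => h.symm)

end SmallGrowthAux

open SmallGrowthAux


/-- The number of directed paths of length `n` starting at vertex `v`, for the graph
with adjacency matrix `M` (with multiplicities): `(Mⁿ 𝟙)_v`. -/
def pathCount {V : Type*} [Fintype V] [DecidableEq V] (M : Matrix V V ℕ) (v : V) (n : ℕ) : ℕ :=
  (M ^ n).mulVec (fun _ => 1) v

/-- A finite directed graph with adjacency matrix `M` is almost semisimple of growth
`lam > 1` with initial vertex `v0` if every vertex is reachable from `v0`, the largest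
modulus of the (complex) eigenvalues of `M` is `lam`, and every eigenvalue of modulus
`lam` has equal geometric and algebraic multiplicity (no nontrivial Jordan blocks:
`ker (M − μ)² = ker (M − μ)`). -/
structure AlmostSemisimple {V : Type*} [Fintype V] [DecidableEq V]
    (M : Matrix V V ℕ) (v0 : V) (lam : ℝ) : Prop where
  growth_gt_one : 1 < lam
  accessible : ∀ v : V, ∃ n : ℕ, (M ^ n) v0 v ≠ 0
  eigen_le : ∀ μ : ℂ, (Matrix.charpoly (M.map (Nat.cast : ℕ → ℂ))).IsRoot μ →
    ‖μ‖ ≤ lam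
  eigen_top : ∃ μ : ℂ, (Matrix.charpoly (M.map (Nat.cast : ℕ → ℂ))).IsRoot μ ∧
    ‖μ‖ = lam
  semisimple_top : ∀ μ : ℂ, ‖μ‖ = lam →
    ∀ x : V → ℂ,
      (M.map (Nat.cast : ℕ → ℂ) - μ • 1).mulVec
          ((M.map (Nat.cast : ℕ → ℂ) - μ • 1).mulVec x) = 0 →
      (M.map (Nat.cast : ℕ → ℂ) - μ • 1).mulVec x = 0

/-- `ρ1 v` is the Cesàro limit `ρ(𝟙)_v = lim_N (1/N) Σ_{n<N} (Mⁿ𝟙)_v / lamⁿ`. -/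
def IsRho1 {V : Type*} [Fintype V] [DecidableEq V] (M : Matrix V V ℕ) (lam : ℝ) (ρ1 : V → ℝ) : Prop :=
  ∀ v : V, Tendsto
    (fun N : ℕ => (N : ℝ)⁻¹ * ∑ n ∈ Finset.range N, (pathCount M v n : ℝ) / lam ^ n)
    atTop (nhds (ρ1 v))

/-- in an almost semisimple graph of growth `lam > 1`, for any vertex `v`
of small growth (`ρ(𝟙)_v = 0`) there are `c > 0` and `0 ≤ lam₁ < lam` with
`#{paths of length n from v} ≤ c·lam₁ⁿ` for all `n`. -/
theorem pathCount_small_growth {V : Type*} [Fintype V] [DecidableEq V]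
    (M : Matrix V V ℕ) (v0 : V) (lam : ℝ) (hAS : AlmostSemisimple M v0 lam)
    (ρ1 : V → ℝ) (hρ : IsRho1 M lam ρ1)
    (v : V) (hv : ρ1 v = 0) :
    ∃ c > (0 : ℝ), ∃ lam1 : ℝ, 0 ≤ lam1 ∧ lam1 < lam ∧
      ∀ n : ℕ, (pathCount M v n : ℝ) ≤ c * lam1 ^ n := by
  classical
  obtain ⟨hlam1, -, eigen_le, -, semisimple_top⟩ := hAS
  have hlam0 : (0:ℝ) < lam := by linarith
  set A : Matrix V V ℂ := M.map (Nat.cast : ℕ → ℂ) with hA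
  -- cast of path counts
  have hcast : ∀ n : ℕ, ((pathCount M v n : ℂ)) = (A ^ n).mulVec (fun _ => 1) v := by
    intro n
    have hpow : A ^ n = (M ^ n).map (Nat.cast : ℕ → ℂ) := by
      have h1 := map_pow ((Nat.castRingHom ℂ).mapMatrix) M n
      simp only [RingHom.mapMatrix_apply, Nat.coe_castRingHom] at h1
      rw [hA]
      exact h1.symm
    rw [hpow]
    simp only [pathCount, Matrix.mulVec, dotProduct, Matrix.map_apply]
    push_cast
    ring
  -- Cayley–Hamilton and splitting of the characteristic polynomial
  set p : Polynomial ℂ := A.charpoly with hp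
  have hsplit : p = Pl p.roots :=
    (IsAlgClosed.splits p).eq_prod_roots_of_monic A.charpoly_monic
  set R : Multiset ℂ := p.roots with hR
  set Rb : Multiset ℂ := R.filter (fun μ => ‖μ‖ = lam) with hRb
  set Rs : Multiset ℂ := R.filter (fun μ => ¬ ‖μ‖ = lam) with hRs
  have hRsplit : Rb + Rs = R := Multiset.filter_add_not _ R
  have hPlp : Pl Rb * Pl Rs = p := by rw [← Pl_add, hRsplit, ← hsplit]
  have hCH : (aeval A (Pl Rb * Pl Rs)).mulVec (fun _ => (1:ℂ)) = 0 := by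
    rw [hPlp, hp, Matrix.aeval_self_charpoly, Matrix.zero_mulVec]
  have hroot : ∀ μ ∈ R, ‖μ‖ ≤ lam := by
    intro μ hμ
    exact eigen_le μ (Polynomial.mem_roots'.1 hμ).2
  -- split 𝟙 = wt + ws
  have hcop : IsCoprime (Pl Rb) (Pl Rs) := by
    refine coprime_Pl Rb Rs fun μ hμ ν hν h' => ?_
    have h1 := (Multiset.mem_filter.1 hμ).2
    have h2 := (Multiset.mem_filter.1 hν).2
    exact h2 (h' ▸ h1)
  obtain ⟨wt, ws, hw, hwt, hws⟩ := coprime_split A hcop _ hCH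
  -- the top part is a sum of eigenvectors
  have hwt' : (aeval A (Pl Rb.dedup)).mulVec wt = 0 := by
    refine dedup_kill A Rb (fun μ hμ x hx => ?_) wt hwt
    exact semisimple_top μ (Multiset.mem_filter.1 hμ).2 x hx
  obtain ⟨g, hgsum, hgeig⟩ := eigen_decomp A Rb.dedup (Multiset.nodup_dedup _) wt hwt'
  set F : Finset ℂ := Rb.dedup.toFinset with hF
  have hFbig : ∀ μ ∈ F, ‖μ‖ = lam := by
    intro μ hμ
    exact (Multiset.mem_filter.1 (Multiset.mem_dedup.1 (Multiset.mem_toFinset.1 hμ))).2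
  -- choice of lam1
  set S : Finset ℝ := insert 0 (Rs.toFinset.image (fun μ : ℂ => ‖μ‖)) with hS
  have hSne : S.Nonempty := ⟨0, Finset.mem_insert_self _ _⟩
  set lam0 : ℝ := S.max' hSne with hlam0def
  have hlam0lt : lam0 < lam := by
    rw [hlam0def, Finset.max'_lt_iff]
    intro y hy
    rcases Finset.mem_insert.1 hy with rfl | hy'
    · linarith
    · obtain ⟨ν, hν, rfl⟩ := Finset.mem_image.1 hy'
      have hν2 := Multiset.mem_filter.1 (Multiset.mem_toFinset.1 hν)
      exact lt_of_le_of_ne (hroot ν hν2.1) hν2.2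
  have hlam00 : 0 ≤ lam0 := Finset.le_max' _ 0 (Finset.mem_insert_self _ _)
  set lam1 : ℝ := (lam0 + lam) / 2 with hlam1def
  have h0lam1 : 0 < lam1 := by rw [hlam1def]; linarith
  have hlam1lt : lam1 < lam := by rw [hlam1def]; linarith
  have hlam0lam1 : lam0 < lam1 := by rw [hlam1def]; linarith
  -- growth of the small part
  obtain ⟨C, hC⟩ := growth A lam1 Rs (fun ν hν => by
      refine lt_of_le_of_lt (Finset.le_max' S _ ?_) hlam0lam1
      exact Finset.mem_insert_of_mem
        (Finset.mem_image.2 ⟨ν, Multiset.mem_toFinset.2 hν, rfl⟩)) ws hws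
  have hC0 : 0 ≤ C := by
    have := hC 0
    simp only [pow_zero, mul_one] at this
    exact le_trans (norm_nonneg _) this
  -- main identity for path counts
  have hti : ∀ n : ℕ, ((pathCount M v n : ℂ))
      = (∑ μ ∈ F, μ ^ n * g μ v) + ((A ^ n).mulVec ws) v := by
    intro n
    have hvec : (A ^ n).mulVec wt = ∑ μ ∈ F, μ ^ n • g μ := by
      rw [hgsum]
      have hlin : (A ^ n).mulVec (∑ μ ∈ F, g μ) = ∑ μ ∈ F, (A ^ n).mulVec (g μ) := by
        rw [← Matrix.mulVecLin_apply, map_sum]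
        simp only [Matrix.mulVecLin_apply]
      rw [hlin]
      exact Finset.sum_congr rfl fun μ hμ => eigen_pow A μ (g μ) (hgeig μ hμ) n
    rw [hcast n, hw, Matrix.mulVec_add, Pi.add_apply, hvec]
    congr 1
    rw [Finset.sum_apply]
    exact Finset.sum_congr rfl fun μ _ => rfl
  -- bound on the small part coordinate
  have hr : ∀ n : ℕ, ‖((A ^ n).mulVec ws) v‖ ≤ C * lam1 ^ n := fun n =>
    le_trans (norm_le_pi_norm _ v) (hC n)
  -- all top coefficients at v vanish
  have hcoef : ∀ ν ∈ F, g ν v = 0 := by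
    intro ν hν
    have hνb : ‖ν‖ = lam := hFbig ν hν
    have hν0 : ν ≠ 0 := by
      intro h
      rw [h] at hνb
      simp only [norm_zero] at hνb
      linarith
    have hνpow : ∀ n : ℕ, (ν : ℂ) ^ n ≠ 0 := fun n => pow_ne_zero n hν0
    have hνnorm : ‖ν‖ = lam := by rw [hνb]
    -- the Cesàro average against ν
    set Sq : ℕ → ℂ := fun N =>
      (N : ℂ)⁻¹ * ∑ n ∈ Finset.range N, (pathCount M v n : ℂ) / ν ^ n with hSq
    have hsummand : ∀ n : ℕ, (pathCount M v n : ℂ) / ν ^ n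
        = (∑ μ ∈ F, g μ v * (μ / ν) ^ n) + ((A ^ n).mulVec ws) v / ν ^ n := by
      intro n
      rw [hti n, add_div]
      congr 1
      rw [Finset.sum_div]
      refine Finset.sum_congr rfl fun μ _ => ?_
      rw [div_pow]
      field_simp
    have hfun : ∀ N : ℕ, Sq N
        = (∑ μ ∈ F, g μ v * ((N : ℂ)⁻¹ * ∑ n ∈ Finset.range N, (μ / ν) ^ n))
          + (N : ℂ)⁻¹ * ∑ n ∈ Finset.range N, ((A ^ n).mulVec ws) v / ν ^ n := by
      intro N
      rw [hSq]
      simp only [hsummand]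
      rw [Finset.sum_add_distrib, mul_add]
      congr 1
      rw [Finset.sum_comm, Finset.mul_sum]
      refine Finset.sum_congr rfl fun μ _ => ?_
      rw [← Finset.mul_sum]
      ring
    have hterm : ∀ μ ∈ F, Tendsto
        (fun N : ℕ => g μ v * ((N : ℂ)⁻¹ * ∑ n ∈ Finset.range N, (μ / ν) ^ n))
        atTop (nhds (if μ = ν then g ν v else 0)) := by
      intro μ hμ
      by_cases hμν : μ = ν
      · subst hμν
        rw [if_pos rfl]
        have h1 : μ / μ = 1 := div_self hν0
        rw [h1]
        simpa using cesaro_one.const_mul (g μ v)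
      · rw [if_neg hμν]
        have habs : ‖μ / ν‖ = 1 := by
          rw [norm_div, hFbig μ hμ, hνb, div_self (by linarith : lam ≠ 0)]
        have hne1 : μ / ν ≠ 1 := by
          intro h
          exact hμν ((div_eq_one_iff_eq hν0).1 h)
        simpa using (cesaro_geom habs hne1).const_mul (g μ v)
    have hsumlim : Tendsto
        (fun N : ℕ => ∑ μ ∈ F, g μ v * ((N : ℂ)⁻¹ * ∑ n ∈ Finset.range N, (μ / ν) ^ n))
        atTop (nhds (g ν v)) := by
      have := tendsto_finset_sum F hterm
      rwa [Finset.sum_ite_eq' F ν (fun _ => g ν v), if_pos hν] at this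
    have hrlim : Tendsto
        (fun N : ℕ => (N : ℂ)⁻¹ * ∑ n ∈ Finset.range N, ((A ^ n).mulVec ws) v / ν ^ n)
        atTop (nhds 0) := by
      refine cesaro_decay (C := C) (r := lam1 / lam)
        (div_nonneg h0lam1.le hlam0.le) ((div_lt_one hlam0).2 hlam1lt) fun n => ?_
      rw [norm_div, norm_pow, hνnorm]
      rw [div_le_iff₀ (pow_pos hlam0 n)]
      calc ‖((A ^ n).mulVec ws) v‖ ≤ C * lam1 ^ n := hr n
        _ = C * (lam1 / lam) ^ n * lam ^ n := by
            have hln : (lam:ℝ) ^ n ≠ 0 := ne_of_gt (pow_pos hlam0 n)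
            rw [mul_assoc, ← mul_pow, div_mul_cancel₀ _ hlam0.ne']
    have hLim1 : Tendsto Sq atTop (nhds (g ν v)) := by
      have := hsumlim.add hrlim
      rw [add_zero] at this
      exact this.congr fun N => (hfun N).symm
    -- the norm bound via the Cesàro hypothesis
    have h0 : Tendsto
        (fun N : ℕ => (N : ℝ)⁻¹ * ∑ n ∈ Finset.range N, (pathCount M v n : ℝ) / lam ^ n)
        atTop (nhds 0) := by
      have := hρ v
      rwa [hv] at this
    have hBnd : ∀ N : ℕ, ‖Sq N‖
        ≤ (N : ℝ)⁻¹ * ∑ n ∈ Finset.range N, (pathCount M v n : ℝ) / lam ^ n := by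
      intro N
      rw [hSq, norm_mul, norm_inv, Complex.norm_natCast]
      refine mul_le_mul_of_nonneg_left ?_ (inv_nonneg.2 (Nat.cast_nonneg N))
      refine le_trans (norm_sum_le _ _) (le_of_eq ?_)
      refine Finset.sum_congr rfl fun n _ => ?_
      rw [norm_div, norm_pow, hνnorm, Complex.norm_natCast]
    have hle : ‖g ν v‖ ≤ 0 := le_of_tendsto_of_tendsto' hLim1.norm h0 hBnd
    exact norm_le_zero_iff.1 hle
  -- conclusion
  refine ⟨max C 1, lt_of_lt_of_le one_pos (le_max_right C 1), lam1, h0lam1.le, hlam1lt,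
    fun n => ?_⟩
  have h1 : (pathCount M v n : ℝ) = ‖(pathCount M v n : ℂ)‖ := by
    rw [Complex.norm_natCast]
  rw [h1, hti n]
  have h2 : (∑ μ ∈ F, μ ^ n * g μ v) = 0 :=
    Finset.sum_eq_zero fun μ hμ => by rw [hcoef μ hμ, mul_zero]
  rw [h2, zero_add]
  calc ‖((A ^ n).mulVec ws) v‖ ≤ C * lam1 ^ n := hr n
    _ ≤ max C 1 * lam1 ^ n :=
        mul_le_mul_of_nonneg_right (le_max_left C 1) (pow_nonneg h0lam1.le n)
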